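/- Let n, m be nonzero integers. Then the cohomology of the cochain complex C(n) ⊗_R D(m), computed in the category of abelian groups, satisfies: H⁰ ≅ ℤ, H¹ ≅ ℤ² ⊕ ℤ/|nm|ℤ, H² ≅ ℤ ⊕ ℤ/|nm|ℤ, and Hⁱ = 0 for all other i. In particular the cohomology contains torsion of order exactly |nm|. -/

import Mathlib

/-!
Statement 13: Let `R = ℤ[X]/(X²)` (dual numbers over `ℤ`, `X = ε`), and let `n, m` be
nonzero integers.  `C(n)` is the complex of `R`-`R`-bimodules `S --δₙ--> S` (degrees
0, 1), `S = R ⊗[ℤ] R`, `δₙ` = multiplication by `nX⊗1 - 1⊗X`; `D(m)` is the complex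
of left `R`-modules `R --mX--> R` (degrees 0, 1).  The total complex `C(n) ⊗_R D(m)`
is concentrated in degrees 0, 1, 2; under the canonical identification
`(R⊗R) ⊗_R R ≅ R⊗R = S` its differentials are `d⁰ = (δₙ·, (1⊗mX)·)` and
`d¹ = (-(1⊗mX)·) ⊕ (δₙ·)`.

Claim: the cohomology of `C(n) ⊗_R D(m)`, computed in the category of abelian groups,
satisfies `H⁰ ≅ ℤ`, `H¹ ≅ ℤ² ⊕ ℤ/|nm|ℤ`, `H² ≅ ℤ ⊕ ℤ/|nm|ℤ`, and `Hⁱ = 0`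
otherwise.
-/

open TensorProduct DualNumber CategoryTheory CategoryTheory.Limits

noncomputable section

/-- `R = ℤ[X]/(X²)`, the dual numbers over `ℤ`. -/
abbrev Rd : Type := DualNumber ℤ

/-- `S = R ⊗[ℤ] R`. -/
abbrev Sd : Type := Rd ⊗[ℤ] Rd

/-- the element `n X ⊗ 1 - 1 ⊗ X` of `S`, the differential of `C(n)`. -/
def deltaEl (n : ℤ) : Sd := n • ((ε : Rd) ⊗ₜ[ℤ] (1 : Rd)) - (1 : Rd) ⊗ₜ[ℤ] (ε : Rd)

/-- the element `1 ⊗ mX` of `S`, i.e. the differential `1 ⊗ νₘ`. -/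
def nuEl (m : ℤ) : Sd := m • ((1 : Rd) ⊗ₜ[ℤ] (ε : Rd))

/-- the three-term cochain complex concentrated in degrees 0, 1, 2 determined by
`f`, `g` with `f ≫ g = 0`. -/
noncomputable def threeTerm {A : Type} [Ring A] (M0 M1 M2 : ModuleCat A)
    (f : M0 ⟶ M1) (g : M1 ⟶ M2) (hfg : f ≫ g = 0) :
    CochainComplex (ModuleCat A) ℤ where
  X i := if i = 0 then M0 else if i = 1 then M1 else if i = 2 then M2
    else ModuleCat.of A PUnit
  d i j :=
    if h : i = 0 ∧ j = 1 then
      (eqToHom (by simp [h.1]) : _ ⟶ M0) ≫ f ≫ (eqToHom (by simp [h.2]) : M1 ⟶ _)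
    else if h' : i = 1 ∧ j = 2 then
      (eqToHom (by simp [h'.1]) : _ ⟶ M1) ≫ g ≫ (eqToHom (by simp [h'.2]) : M2 ⟶ _)
    else 0
  shape i j hij := by
    rw [dif_neg (by rintro ⟨rfl, rfl⟩; exact hij rfl),
      dif_neg (by rintro ⟨rfl, rfl⟩; exact hij rfl)]
  d_comp_d' i j k hij hjk := by
    by_cases h01 : i = 0 ∧ j = 1
    · obtain ⟨rfl, rfl⟩ := h01
      obtain rfl : k = 2 := by have h2 : (1 : ℤ) + 1 = k := hjk; omega
      rw [dif_pos ⟨rfl, rfl⟩, dif_neg (by norm_num), dif_pos ⟨rfl, rfl⟩]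
      simp only [Category.assoc, eqToHom_trans_assoc, eqToHom_refl, Category.id_comp]
      simp [reassoc_of% hfg, hfg]
    · by_cases h12 : i = 1 ∧ j = 2
      · obtain ⟨rfl, rfl⟩ := h12
        rw [dif_neg (by norm_num : ¬((2 : ℤ) = 0 ∧ k = 1)),
          dif_neg (by rintro ⟨h, -⟩; norm_num at h : ¬((2 : ℤ) = 1 ∧ k = 2)), comp_zero]
      · rw [dif_neg h01, dif_neg h12, zero_comp]

/-- the degree-0 differential `(δₙ ⊗ 1, 1 ⊗ νₘ)` of `C(n) ⊗_R D(m)` (as a complex of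
abelian groups / `ℤ`-modules). -/
def d0Z (n m : ℤ) : ModuleCat.of ℤ Sd ⟶ ModuleCat.of ℤ (Sd × Sd) :=
  ModuleCat.ofHom (LinearMap.prod (LinearMap.mulLeft ℤ (deltaEl n)) (LinearMap.mulLeft ℤ (nuEl m)))

/-- the degree-1 differential `(-(1 ⊗ νₘ)) ⊕ (δₙ ⊗ 1)` of `C(n) ⊗_R D(m)`. -/
def d1Z (n m : ℤ) : ModuleCat.of ℤ (Sd × Sd) ⟶ ModuleCat.of ℤ Sd :=
  ModuleCat.ofHom ((LinearMap.mulLeft ℤ (deltaEl n)).comp (LinearMap.snd ℤ Sd Sd)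
    - (LinearMap.mulLeft ℤ (nuEl m)).comp (LinearMap.fst ℤ Sd Sd))

theorem dZ_comp (n m : ℤ) : d0Z n m ≫ d1Z n m = 0 := by
  have key : ∀ y : Sd, deltaEl n * (nuEl m * y) - nuEl m * (deltaEl n * y) = 0 :=
    fun y => sub_eq_zero_of_eq (mul_left_comm (deltaEl n) (nuEl m) y)
  apply ModuleCat.hom_ext; apply LinearMap.ext; intro x
  exact key x

/-- the total complex `C(n) ⊗_R D(m)` as a complex of abelian groups (`ℤ`-modules),
concentrated in degrees 0, 1, 2. -/
noncomputable def CtensDZ (n m : ℤ) : CochainComplex (ModuleCat ℤ) ℤ :=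
  threeTerm (ModuleCat.of ℤ Sd) (ModuleCat.of ℤ (Sd × Sd)) (ModuleCat.of ℤ Sd)
    (d0Z n m) (d1Z n m) (dZ_comp n m)

abbrev V : Type := Fin 4 → ℤ

def fromV : V →ₗ[ℤ] Sd :=
  (LinearMap.proj 0).smulRight ((1:Rd) ⊗ₜ[ℤ] (1:Rd)) +
  (LinearMap.proj 1).smulRight ((ε:Rd) ⊗ₜ[ℤ] (1:Rd)) +
  (LinearMap.proj 2).smulRight ((1:Rd) ⊗ₜ[ℤ] (ε:Rd)) +
  (LinearMap.proj 3).smulRight ((ε:Rd) ⊗ₜ[ℤ] (ε:Rd))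

lemma fromV_apply (v : V) :
    fromV v = v 0 • ((1:Rd) ⊗ₜ[ℤ] (1:Rd)) + v 1 • ((ε:Rd) ⊗ₜ[ℤ] (1:Rd)) +
      v 2 • ((1:Rd) ⊗ₜ[ℤ] (ε:Rd)) + v 3 • ((ε:Rd) ⊗ₜ[ℤ] (ε:Rd)) := by
  simp only [fromV, LinearMap.add_apply, LinearMap.smulRight_apply, LinearMap.proj_apply]

def toV : Sd →ₗ[ℤ] V :=
  TensorProduct.lift (LinearMap.mk₂ ℤ
    (fun r s => ![r.fst * s.fst, r.snd * s.fst, r.fst * s.snd, r.snd * s.snd])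
    (fun r r' s => by
      funext i
      fin_cases i <;>
        simp [TrivSqZeroExt.fst_add, TrivSqZeroExt.snd_add, add_mul])
    (fun c r s => by
      funext i
      fin_cases i <;>
        simp [TrivSqZeroExt.fst_smul, TrivSqZeroExt.snd_smul, smul_eq_mul] <;> try ring)
    (fun r s s' => by
      funext i
      fin_cases i <;>
        simp [TrivSqZeroExt.fst_add, TrivSqZeroExt.snd_add, mul_add])
    (fun c r s => by
      funext i
      fin_cases i <;>
        simp [TrivSqZeroExt.fst_smul, TrivSqZeroExt.snd_smul, smul_eq_mul] <;> try ring))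

lemma toV_tmul (r s : Rd) :
    toV (r ⊗ₜ[ℤ] s) = ![r.fst * s.fst, r.snd * s.fst, r.fst * s.snd, r.snd * s.snd] := rfl

lemma toV_fromV (v : V) : toV (fromV v) = v := by
  rw [fromV_apply]
  simp only [map_add, map_smul, toV_tmul]
  funext i
  fin_cases i <;>
    simp [TrivSqZeroExt.fst_one, TrivSqZeroExt.snd_one, fst_eps, snd_eps, smul_eq_mul]

lemma decomp (r : Rd) : r = r.fst • (1:Rd) + r.snd • (ε:Rd) := by
  ext <;> simp [TrivSqZeroExt.fst_smul, TrivSqZeroExt.snd_smul, fst_eps, snd_eps]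

lemma fromV_toV (x : Sd) : fromV (toV x) = x := by
  induction x using TensorProduct.induction_on with
  | zero => simp
  | tmul r s =>
      rw [toV_tmul, fromV_apply]
      conv_rhs => rw [decomp r, decomp s]
      simp only [add_tmul, tmul_add, ← smul_tmul', tmul_smul, smul_smul,
        Matrix.cons_val_zero, Matrix.cons_val_one, Matrix.head_cons,
        Matrix.cons_val_two, Matrix.cons_val_three, Matrix.vecHead, Matrix.vecTail,
        Matrix.cons_val_succ, Function.comp_apply]
      module
  | add a b ha hb => rw [map_add, map_add, ha, hb]

def An (n : ℤ) : V →ₗ[ℤ] V where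
  toFun v := ![0, n * v 0, -(v 0), n * v 2 - v 1]
  map_add' v w := by funext i; fin_cases i <;> simp [Pi.add_apply] <;> ring
  map_smul' c v := by funext i; fin_cases i <;> simp [smul_eq_mul] <;> ring

def Bm (m : ℤ) : V →ₗ[ℤ] V where
  toFun v := ![0, 0, m * v 0, m * v 1]
  map_add' v w := by funext i; fin_cases i <;> simp [Pi.add_apply] <;> ring
  map_smul' c v := by funext i; fin_cases i <;> simp [smul_eq_mul] <;> ring

lemma An_apply (n : ℤ) (v : V) : An n v = ![0, n * v 0, -(v 0), n * v 2 - v 1] := rfl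
lemma Bm_apply (m : ℤ) (v : V) : Bm m v = ![0, 0, m * v 0, m * v 1] := rfl

lemma delta_mul_fromV (n : ℤ) (v : V) : deltaEl n * fromV v = fromV (An n v) := by
  rw [fromV_apply, fromV_apply, An_apply, deltaEl]
  simp only [Matrix.cons_val_zero, Matrix.cons_val_one, Matrix.head_cons,
    Matrix.cons_val_two, Matrix.cons_val_three, Matrix.vecHead, Matrix.vecTail,
    Matrix.cons_val_succ, Function.comp_apply]
  simp only [mul_add, sub_mul, smul_mul_assoc, mul_smul_comm,
    Algebra.TensorProduct.tmul_mul_tmul, eps_mul_eps, one_mul, mul_one,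
    TensorProduct.zero_tmul, TensorProduct.tmul_zero, smul_zero]
  module

lemma nu_mul_fromV (m : ℤ) (v : V) : nuEl m * fromV v = fromV (Bm m v) := by
  rw [fromV_apply, fromV_apply, Bm_apply, nuEl]
  simp only [Matrix.cons_val_zero, Matrix.cons_val_one, Matrix.head_cons,
    Matrix.cons_val_two, Matrix.cons_val_three, Matrix.vecHead, Matrix.vecTail,
    Matrix.cons_val_succ, Function.comp_apply]
  simp only [mul_add, smul_mul_assoc, mul_smul_comm,
    Algebra.TensorProduct.tmul_mul_tmul, eps_mul_eps, one_mul, mul_one,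
    TensorProduct.zero_tmul, TensorProduct.tmul_zero, smul_zero]
  module

lemma toV_delta_mul (n : ℤ) (x : Sd) : toV (deltaEl n * x) = An n (toV x) := by
  conv_lhs => rw [← fromV_toV x, delta_mul_fromV, toV_fromV]

lemma toV_nu_mul (m : ℤ) (x : Sd) : toV (nuEl m * x) = Bm m (toV x) := by
  conv_lhs => rw [← fromV_toV x, nu_mul_fromV, toV_fromV]

def SC0 (n m : ℤ) : ShortComplex (ModuleCat ℤ) :=
  ShortComplex.mk (0 : ModuleCat.of ℤ PUnit ⟶ ModuleCat.of ℤ Sd) (d0Z n m) (by simp)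

def SC1 (n m : ℤ) : ShortComplex (ModuleCat ℤ) :=
  ShortComplex.mk (d0Z n m) (d1Z n m) (dZ_comp n m)

def SC2 (n m : ℤ) : ShortComplex (ModuleCat ℤ) :=
  ShortComplex.mk (d1Z n m) (0 : ModuleCat.of ℤ Sd ⟶ ModuleCat.of ℤ PUnit) (by simp)

def e0 (n m : ℤ) : (CtensDZ n m).sc' (-1) 0 1 ≅ SC0 n m :=
  ShortComplex.isoMk (Iso.refl _) (Iso.refl _) (Iso.refl _) (by ext x; rfl) (by ext x; rfl)

def e1 (n m : ℤ) : (CtensDZ n m).sc' 0 1 2 ≅ SC1 n m :=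
  ShortComplex.isoMk (Iso.refl _) (Iso.refl _) (Iso.refl _) (by ext x; rfl) (by ext x; rfl)

def e2 (n m : ℤ) : (CtensDZ n m).sc' 1 2 3 ≅ SC2 n m :=
  ShortComplex.isoMk (Iso.refl _) (Iso.refl _) (Iso.refl _) (by ext x; rfl) (by ext x; rfl)

def hIso0 (n m : ℤ) : (CtensDZ n m).homology 0 ≅ (SC0 n m).moduleCatLeftHomologyData.H :=
  ShortComplex.homologyMapIso ((CtensDZ n m).isoSc' (-1) 0 1 (by simp) (by simp) ≪≫ e0 n m) ≪≫
    (SC0 n m).moduleCatHomologyIso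

def hIso1 (n m : ℤ) : (CtensDZ n m).homology 1 ≅ (SC1 n m).moduleCatLeftHomologyData.H :=
  ShortComplex.homologyMapIso ((CtensDZ n m).isoSc' 0 1 2 (by simp) (by simp) ≪≫ e1 n m) ≪≫
    (SC1 n m).moduleCatHomologyIso

def hIso2 (n m : ℤ) : (CtensDZ n m).homology 2 ≅ (SC2 n m).moduleCatLeftHomologyData.H :=
  ShortComplex.homologyMapIso ((CtensDZ n m).isoSc' 1 2 3 (by simp) (by simp) ≪≫ e2 n m) ≪≫
    (SC2 n m).moduleCatHomologyIso

lemma d0Z_apply (n m : ℤ) (x : Sd) : (d0Z n m).hom x = (deltaEl n * x, nuEl m * x) := rfl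
lemma d1Z_apply (n m : ℤ) (p : Sd × Sd) : (d1Z n m).hom p = deltaEl n * p.2 - nuEl m * p.1 := rfl

lemma eq_vec (w : V) : w = ![w 0, w 1, w 2, w 3] := by
  funext i
  fin_cases i <;> rfl


lemma vec_ext4 {w v : V} (h0 : w 0 = v 0) (h1 : w 1 = v 1) (h2 : w 2 = v 2)
    (h3 : w 3 = v 3) : w = v := by
  funext i
  fin_cases i
  · simpa using h0
  · simpa using h1
  · simpa using h2
  · simpa using h3

lemma range_toCycles_SC0 (n m : ℤ) :
    LinearMap.range (SC0 n m).moduleCatToCycles = ⊥ := by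
  rw [eq_bot_iff]
  rintro y ⟨x, rfl⟩
  simp only [Submodule.mem_bot]
  ext
  simp [ShortComplex.moduleCatToCycles, SC0]
  rfl

lemma mem_ker_d0Z {n m : ℤ} (hn : n ≠ 0) (hm : m ≠ 0) (x : Sd) :
    x ∈ LinearMap.ker (d0Z n m).hom ↔ ∃ k : ℤ, x = fromV ![0, 0, 0, k] := by
  constructor
  · intro hx
    have h := (LinearMap.mem_ker.mp hx)
    have h1 : deltaEl n * x = 0 := congrArg Prod.fst h
    have h2 : nuEl m * x = 0 := congrArg Prod.snd h
    have hA : An n (toV x) = 0 := by rw [← toV_delta_mul, h1, map_zero]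
    have hB : Bm m (toV x) = 0 := by rw [← toV_nu_mul, h2, map_zero]
    set w := toV x with hw
    have e1 : n * w 0 = 0 := by simpa [An_apply] using congrFun hA 1
    have e3 : n * w 2 - w 1 = 0 := by simpa [An_apply] using congrFun hA 3
    have f3 : m * w 1 = 0 := by simpa [Bm_apply] using congrFun hB 3
    have hw0 : w 0 = 0 := by
      rcases mul_eq_zero.mp e1 with h | h
      · exact absurd h hn
      · exact h
    have hw1 : w 1 = 0 := by
      rcases mul_eq_zero.mp f3 with h | h
      · exact absurd h hm
      · exact h
    have hw2 : w 2 = 0 := by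
      have : n * w 2 = 0 := by omega
      rcases mul_eq_zero.mp this with h | h
      · exact absurd h hn
      · exact h
    refine ⟨w 3, ?_⟩
    rw [← fromV_toV x, ← hw]
    congr 1
    rw [eq_vec w, hw0, hw1, hw2]
    simp
  · rintro ⟨k, rfl⟩
    have hA : An n ![0,0,0,k] = 0 := by
      funext i; fin_cases i <;> simp [An_apply]
    have hB : Bm m ![0,0,0,k] = 0 := by
      funext i; fin_cases i <;> simp [Bm_apply]
    have key : (deltaEl n * fromV ![0,0,0,k], nuEl m * fromV ![0,0,0,k])
        = ((0 : Sd), (0 : Sd)) := by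
      rw [delta_mul_fromV, nu_mul_fromV, hA, hB, map_zero]
    exact LinearMap.mem_ker.mpr key

def ker0Equiv {n m : ℤ} (hn : n ≠ 0) (hm : m ≠ 0) :
    LinearMap.ker (d0Z n m).hom ≃ₗ[ℤ] ℤ :=
  LinearEquiv.ofBijective
    ((LinearMap.proj 3 ∘ₗ toV) ∘ₗ (LinearMap.ker (d0Z n m).hom).subtype)
    ⟨by
      rintro ⟨x, hx⟩ ⟨y, hy⟩ hxy
      obtain ⟨k, rfl⟩ := (mem_ker_d0Z hn hm x).mp hx
      obtain ⟨l, rfl⟩ := (mem_ker_d0Z hn hm y).mp hy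
      have hkl : k = l := by
        have h' : toV (fromV ![0,0,0,k]) 3 = toV (fromV ![0,0,0,l]) 3 := hxy
        simpa [toV_fromV] using h'
      subst hkl
      rfl,
     fun k => ⟨⟨fromV ![0,0,0,k], (mem_ker_d0Z hn hm _).mpr ⟨k, rfl⟩⟩, by
      show toV (fromV ![0,0,0,k]) 3 = k
      simp [toV_fromV]⟩⟩

def H0Equiv {n m : ℤ} (hn : n ≠ 0) (hm : m ≠ 0) :
    (SC0 n m).moduleCatLeftHomologyData.H ≃ₗ[ℤ] ℤ :=
  (Submodule.quotEquivOfEqBot _ (range_toCycles_SC0 n m)).trans (ker0Equiv hn hm)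

def intCastLin (N : ℕ) : ℤ →ₗ[ℤ] ZMod N :=
  (Int.castRingHom (ZMod N)).toAddMonoidHom.toIntLinearMap

lemma intCastLin_apply (N : ℕ) (a : ℤ) : intCastLin N a = (a : ZMod N) := rfl

/-- the map computing `H²`. -/
def L2 (n m : ℤ) : Sd →ₗ[ℤ] ℤ × ZMod (n * m).natAbs :=
  LinearMap.prod ((LinearMap.proj 0) ∘ₗ toV)
    ((intCastLin _) ∘ₗ ((LinearMap.proj 1 + n • LinearMap.proj 2) ∘ₗ toV))

lemma L2_apply (n m : ℤ) (x : Sd) :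
    L2 n m x = (toV x 0, ((toV x 1 + n * toV x 2 : ℤ) : ZMod (n * m).natAbs)) := rfl

lemma cast_nm_mul (n m t : ℤ) : ((n * m * t : ℤ) : ZMod (n * m).natAbs) = 0 := by
  rcases eq_or_ne (n * m) 0 with h | h
  · rw [h]; simp
  · haveI : NeZero ((n * m).natAbs) := ⟨Int.natAbs_ne_zero.mpr h⟩
    rw [ZMod.intCast_zmod_eq_zero_iff_dvd]
    exact dvd_mul_of_dvd_left (Int.natAbs_dvd.mpr dvd_rfl) t

lemma hle2 (n m : ℤ) :
    LinearMap.range (SC2 n m).moduleCatToCycles ≤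
      LinearMap.ker ((L2 n m) ∘ₗ (LinearMap.ker (SC2 n m).g.hom).subtype) := by
  rintro y ⟨s, rfl⟩
  rw [LinearMap.mem_ker]
  show L2 n m (deltaEl n * s.2 - nuEl m * s.1) = 0
  have ht : toV (deltaEl n * s.2 - nuEl m * s.1) = An n (toV s.2) - Bm m (toV s.1) := by
    rw [map_sub, toV_delta_mul, toV_nu_mul]
  rw [L2_apply, ht]
  set w := toV s.1
  set z := toV s.2
  have h0 : (An n z - Bm m w) 0 = 0 := by simp [An_apply, Bm_apply]
  have h12 : (An n z - Bm m w) 1 + n * (An n z - Bm m w) 2 = n * m * (-(w 0)) := by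
    simp [An_apply, Bm_apply]; ring
  rw [h0, h12, cast_nm_mul]
  rfl

lemma hker2 (n m : ℤ) (hn : n ≠ 0) (hm : m ≠ 0) :
    LinearMap.ker ((L2 n m) ∘ₗ (LinearMap.ker (SC2 n m).g.hom).subtype) ≤
      LinearMap.range (SC2 n m).moduleCatToCycles := by
  haveI : NeZero ((n * m).natAbs) := ⟨Int.natAbs_ne_zero.mpr (mul_ne_zero hn hm)⟩
  rintro ⟨(x : Sd), hx⟩ hmem
  rw [LinearMap.mem_ker] at hmem
  have hmem' : L2 n m x = 0 := hmem
  rw [L2_apply] at hmem'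
  have h0 : toV x 0 = 0 := congrArg Prod.fst hmem'
  have hc : ((toV x 1 + n * toV x 2 : ℤ) : ZMod (n * m).natAbs) = 0 :=
    congrArg Prod.snd hmem'
  rw [ZMod.intCast_zmod_eq_zero_iff_dvd] at hc
  replace hc : (n * m) ∣ (toV x 1 + n * toV x 2) := Int.natAbs_dvd.mp hc
  obtain ⟨k, hk⟩ := hc
  set w := toV x with hwdef
  refine ⟨(fromV ![-k, 0, 0, 0], fromV ![m * k - w 2, -(w 3), 0, 0]), ?_⟩
  apply Subtype.ext
  show deltaEl n * fromV ![m * k - w 2, -(w 3), 0, 0] - nuEl m * fromV ![-k, 0, 0, 0] = x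
  rw [delta_mul_fromV, nu_mul_fromV, ← map_sub]
  have hv : An n ![m * k - w 2, -(w 3), 0, 0] - Bm m ![-k, 0, 0, 0] = w := by
    refine vec_ext4 ?_ ?_ ?_ ?_ <;>
      simp only [An_apply, Bm_apply, Matrix.cons_val_zero, Matrix.cons_val_one,
        Matrix.head_cons, Matrix.cons_val_two, Matrix.cons_val_three, Matrix.vecHead,
        Matrix.vecTail, Matrix.cons_val_succ, Function.comp_apply, Pi.sub_apply]
    · omega
    · linear_combination -hk
    · ring
    · ring
  rw [hv, hwdef, fromV_toV]

def H2Equiv (n m : ℤ) (hn : n ≠ 0) (hm : m ≠ 0) :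
    (SC2 n m).moduleCatLeftHomologyData.H ≃ₗ[ℤ] ℤ × ZMod (n * m).natAbs := by
  refine LinearEquiv.ofBijective
    (Submodule.liftQ _ ((L2 n m) ∘ₗ (LinearMap.ker (SC2 n m).g.hom).subtype) (hle2 n m))
    ⟨?_, ?_⟩
  · rw [← LinearMap.ker_eq_bot]
    exact Submodule.ker_liftQ_eq_bot _ _ (hle2 n m) (hker2 n m hn hm)
  · rintro ⟨a, c⟩
    obtain ⟨k, rfl⟩ := ZMod.intCast_surjective c
    have hxk : fromV ![a, k, 0, 0] ∈ LinearMap.ker (SC2 n m).g.hom := by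
      show (SC2 n m).g.hom (fromV ![a, k, 0, 0]) = 0; rfl
    refine ⟨Submodule.Quotient.mk ⟨fromV ![a, k, 0, 0], hxk⟩, ?_⟩
    rw [Submodule.liftQ_apply]
    show L2 n m (fromV ![a, k, 0, 0]) = (a, (k : ZMod (n * m).natAbs))
    rw [L2_apply, toV_fromV]
    simp

/-- the map computing `H¹`. -/
def L1 (n m : ℤ) : (Sd × Sd) →ₗ[ℤ] (Fin 2 → ℤ) × ZMod (n * m).natAbs :=
  LinearMap.prod
    (LinearMap.pi ![
      ((LinearMap.proj 1 + n • LinearMap.proj 2) ∘ₗ toV) ∘ₗ LinearMap.fst ℤ Sd Sd,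
      ((LinearMap.proj 2 ∘ₗ toV) ∘ₗ LinearMap.snd ℤ Sd Sd)
        + ((m • LinearMap.proj 2 ∘ₗ toV) ∘ₗ LinearMap.fst ℤ Sd Sd)])
    ((intCastLin _) ∘ₗ
      (((LinearMap.proj 3 ∘ₗ toV) ∘ₗ LinearMap.snd ℤ Sd Sd)
        + ((m • LinearMap.proj 3 ∘ₗ toV) ∘ₗ LinearMap.fst ℤ Sd Sd)))

lemma L1_apply (n m : ℤ) (q : Sd × Sd) :
    L1 n m q = (![toV q.1 1 + n * toV q.1 2, toV q.2 2 + m * toV q.1 2],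
      ((toV q.2 3 + m * toV q.1 3 : ℤ) : ZMod (n * m).natAbs)) := by
  refine Prod.ext ?_ rfl
  funext i
  fin_cases i
  · rfl
  · rfl

lemma vec_ext2 {w v : Fin 2 → ℤ} (h0 : w 0 = v 0) (h1 : w 1 = v 1) : w = v := by
  funext i
  fin_cases i
  · simpa using h0
  · simpa using h1

lemma hle1 (n m : ℤ) :
    LinearMap.range (SC1 n m).moduleCatToCycles ≤
      LinearMap.ker ((L1 n m) ∘ₗ (LinearMap.ker (SC1 n m).g.hom).subtype) := by
  rintro y ⟨(s : Sd), rfl⟩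
  rw [LinearMap.mem_ker]
  show L1 n m (deltaEl n * s, nuEl m * s) = 0
  rw [L1_apply]
  have h1 : toV (deltaEl n * s) = An n (toV s) := toV_delta_mul n s
  have h2 : toV (nuEl m * s) = Bm m (toV s) := toV_nu_mul m s
  refine Prod.ext ?_ ?_
  · refine vec_ext2 ?_ ?_ <;>
      simp only [h1, h2, An_apply, Bm_apply, Pi.zero_apply, Prod.fst_zero, Prod.snd_zero,
        Matrix.cons_val_zero,
        Matrix.cons_val_one, Matrix.head_cons, Matrix.cons_val_two, Matrix.cons_val_three,
        Matrix.vecHead, Matrix.vecTail, Matrix.cons_val_succ, Function.comp_apply] <;>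
      ring
  · show ((toV (nuEl m * s) 3 + m * toV (deltaEl n * s) 3 : ℤ) : ZMod (n * m).natAbs) = 0
    rw [h1, h2]
    have key : Bm m (toV s) 3 + m * An n (toV s) 3 = n * m * toV s 2 := by
      simp only [An_apply, Bm_apply, Matrix.cons_val_zero, Matrix.cons_val_one,
        Matrix.head_cons, Matrix.cons_val_two, Matrix.cons_val_three, Matrix.vecHead,
        Matrix.vecTail, Matrix.cons_val_succ, Function.comp_apply]
      ring
    rw [key, cast_nm_mul]

lemma hker1 (n m : ℤ) (hn : n ≠ 0) (hm : m ≠ 0) :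
    LinearMap.ker ((L1 n m) ∘ₗ (LinearMap.ker (SC1 n m).g.hom).subtype) ≤
      LinearMap.range (SC1 n m).moduleCatToCycles := by
  rintro ⟨(q : Sd × Sd), hq⟩ hmem
  rw [LinearMap.mem_ker] at hmem
  have hmem' : L1 n m q = 0 := hmem
  rw [L1_apply] at hmem'
  set w := toV q.1 with hwdef
  set z := toV q.2 with hzdef
  have hfst : (![w 1 + n * w 2, z 2 + m * w 2] : Fin 2 → ℤ) = 0 := congrArg Prod.fst hmem'
  have g1 : w 1 + n * w 2 = 0 := by simpa using congrFun hfst 0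
  have g2 : z 2 + m * w 2 = 0 := by simpa using congrFun hfst 1
  have hc : ((z 3 + m * w 3 : ℤ) : ZMod (n * m).natAbs) = 0 := congrArg Prod.snd hmem'
  rw [ZMod.intCast_zmod_eq_zero_iff_dvd] at hc
  obtain ⟨k, hk⟩ : (n * m) ∣ (z 3 + m * w 3) := Int.natAbs_dvd.mp hc
  -- kernel conditions from q ∈ ker d1Z
  have hker : deltaEl n * q.2 - nuEl m * q.1 = 0 := hq
  have hkerV : An n z - Bm m w = 0 := by
    rw [hzdef, hwdef, ← toV_delta_mul, ← toV_nu_mul, ← map_sub, hker, map_zero]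
  have e1 : n * z 0 = 0 := by simpa [An_apply, Bm_apply] using congrFun hkerV 1
  have e2 : -(z 0) - m * w 0 = 0 := by simpa [An_apply, Bm_apply] using congrFun hkerV 2
  have e3 : (n * z 2 - z 1) - m * w 1 = 0 := by
    simpa [An_apply, Bm_apply, sub_sub] using congrFun hkerV 3
  have hz0 : z 0 = 0 := by
    rcases mul_eq_zero.mp e1 with h | h
    · exact absurd h hn
    · exact h
  have hw0 : w 0 = 0 := by
    have : m * w 0 = 0 := by omega
    rcases mul_eq_zero.mp this with h | h
    · exact absurd h hm
    · exact h
  refine ⟨fromV ![-(w 2), n * k - w 3, k, 0], ?_⟩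
  apply Subtype.ext
  show (deltaEl n * fromV ![-(w 2), n * k - w 3, k, 0],
        nuEl m * fromV ![-(w 2), n * k - w 3, k, 0]) = q
  rw [delta_mul_fromV, nu_mul_fromV]
  have hA : An n ![-(w 2), n * k - w 3, k, 0] = w := by
    refine vec_ext4 ?_ ?_ ?_ ?_ <;>
      simp only [An_apply, Matrix.cons_val_zero, Matrix.cons_val_one, Matrix.head_cons,
        Matrix.cons_val_two, Matrix.cons_val_three, Matrix.vecHead, Matrix.vecTail,
        Matrix.cons_val_succ, Function.comp_apply]
    · omega
    · linear_combination -g1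
    · ring
    · ring
  have hB : Bm m ![-(w 2), n * k - w 3, k, 0] = z := by
    refine vec_ext4 ?_ ?_ ?_ ?_ <;>
      simp only [Bm_apply, Matrix.cons_val_zero, Matrix.cons_val_one, Matrix.head_cons,
        Matrix.cons_val_two, Matrix.cons_val_three, Matrix.vecHead, Matrix.vecTail,
        Matrix.cons_val_succ, Function.comp_apply]
    · omega
    · linear_combination e3 + m * g1 - n * g2
    · linear_combination -g2
    · linear_combination -hk
  rw [hA, hB, hwdef, hzdef, fromV_toV, fromV_toV]

def H1Equiv (n m : ℤ) (hn : n ≠ 0) (hm : m ≠ 0) :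
    (SC1 n m).moduleCatLeftHomologyData.H ≃ₗ[ℤ] (Fin 2 → ℤ) × ZMod (n * m).natAbs := by
  refine LinearEquiv.ofBijective
    (Submodule.liftQ _ ((L1 n m) ∘ₗ (LinearMap.ker (SC1 n m).g.hom).subtype) (hle1 n m))
    ⟨?_, ?_⟩
  · rw [← LinearMap.ker_eq_bot]
    exact Submodule.ker_liftQ_eq_bot _ _ (hle1 n m) (hker1 n m hn hm)
  · rintro ⟨u, c⟩
    obtain ⟨k, rfl⟩ := ZMod.intCast_surjective c
    have hmem : (fromV ![0, u 0, 0, 0], fromV ![0, n * u 1 - m * u 0, u 1, k])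
        ∈ LinearMap.ker (SC1 n m).g.hom := by
      show deltaEl n * fromV ![0, n * u 1 - m * u 0, u 1, k]
          - nuEl m * fromV ![0, u 0, 0, 0] = 0
      rw [delta_mul_fromV, nu_mul_fromV, ← map_sub]
      have : An n ![0, n * u 1 - m * u 0, u 1, k] - Bm m ![0, u 0, 0, 0] = 0 := by
        refine vec_ext4 ?_ ?_ ?_ ?_ <;>
          simp only [An_apply, Bm_apply, Pi.sub_apply, Pi.zero_apply,
            Matrix.cons_val_zero, Matrix.cons_val_one, Matrix.head_cons,
            Matrix.cons_val_two, Matrix.cons_val_three, Matrix.vecHead, Matrix.vecTail,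
            Matrix.cons_val_succ, Function.comp_apply] <;> ring
      rw [this, map_zero]
    refine ⟨Submodule.Quotient.mk ⟨_, hmem⟩, ?_⟩
    rw [Submodule.liftQ_apply]
    show L1 n m (fromV ![0, u 0, 0, 0], fromV ![0, n * u 1 - m * u 0, u 1, k])
        = (u, (k : ZMod (n * m).natAbs))
    rw [L1_apply]
    refine Prod.ext ?_ ?_
    · show (![_, _] : Fin 2 → ℤ) = u
      have h1 : toV (fromV ![0, u 0, 0, 0]) = ![0, u 0, 0, 0] := toV_fromV _
      have h2 : toV (fromV ![0, n * u 1 - m * u 0, u 1, k]) = ![0, n * u 1 - m * u 0, u 1, k] :=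
        toV_fromV _
      funext i
      fin_cases i <;> simp [h1, h2]
    · show ((toV (fromV ![0, n * u 1 - m * u 0, u 1, k]) 3
          + m * toV (fromV ![0, u 0, 0, 0]) 3 : ℤ) : ZMod (n * m).natAbs) = _
      rw [toV_fromV, toV_fromV]
      norm_num [Matrix.cons_val_three, Matrix.cons_val_two, Matrix.cons_val_succ,
        Matrix.vecHead, Matrix.vecTail]

lemma X_punit (n m : ℤ) (i : ℤ) (h0 : i ≠ 0) (h1 : i ≠ 1) (h2 : i ≠ 2) :
    (CtensDZ n m).X i = ModuleCat.of ℤ PUnit := by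
  show (if i = 0 then _ else if i = 1 then _ else if i = 2 then _ else _) = _
  rw [if_neg h0, if_neg h1, if_neg h2]

lemma homology_subsingleton (n m : ℤ) (i : ℤ) (h0 : i ≠ 0) (h1 : i ≠ 1) (h2 : i ≠ 2) :
    Subsingleton ((CtensDZ n m).homology i) := by
  have hX : IsZero ((CtensDZ n m).X i) := by
    rw [X_punit n m i h0 h1 h2]
    exact ModuleCat.isZero_of_subsingleton _
  have hz : IsZero ((CtensDZ n m).homology i) :=
    ShortComplex.isZero_homology_of_isZero_X₂ _ hX
  have hid : (𝟙 ((CtensDZ n m).homology i) : _ ⟶ _) = 0 := hz.eq_of_src _ _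
  refine ⟨fun a b => ?_⟩
  have ha : a = 0 := by
    have := congrFun (congrArg (fun f => ⇑(ModuleCat.Hom.hom f)) hid) a
    simpa using this
  have hb : b = 0 := by
    have := congrFun (congrArg (fun f => ⇑(ModuleCat.Hom.hom f)) hid) b
    simpa using this
  rw [ha, hb]

def isoToAddEquiv {M N : ModuleCat ℤ} (e : M ≅ N) : M ≃+ N where
  toFun := e.hom.hom
  invFun := e.inv.hom
  left_inv x := by simp
  right_inv x := by simp
  map_add' := map_add e.hom.hom


/-- `H⁰(C(n) ⊗_R D(m)) ≅ ℤ`, `H¹ ≅ ℤ² ⊕ ℤ/|nm|ℤ`, `H² ≅ ℤ ⊕ ℤ/|nm|ℤ`, and all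
other cohomology groups vanish; in particular the cohomology has torsion of order
exactly `|nm|`. -/
theorem cohomology_CtensD (n m : ℤ) (hn : n ≠ 0) (hm : m ≠ 0) :
    Nonempty (((CtensDZ n m).homology 0) ≃+ ℤ) ∧
    Nonempty (((CtensDZ n m).homology 1) ≃+ ((Fin 2 → ℤ) × ZMod (n * m).natAbs)) ∧
    Nonempty (((CtensDZ n m).homology 2) ≃+ (ℤ × ZMod (n * m).natAbs)) ∧
    (∀ i : ℤ, i ≠ 0 → i ≠ 1 → i ≠ 2 → Subsingleton ((CtensDZ n m).homology i)) := by
  refine ⟨⟨(isoToAddEquiv (hIso0 n m)).trans (H0Equiv hn hm).toAddEquiv⟩,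
    ⟨(isoToAddEquiv (hIso1 n m)).trans (H1Equiv n m hn hm).toAddEquiv⟩,
    ⟨(isoToAddEquiv (hIso2 n m)).trans (H2Equiv n m hn hm).toAddEquiv⟩,
    fun i h0 h1 h2 => homology_subsingleton n m i h0 h1 h2⟩

end
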